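/- Assume Σ is positive definite with Cholesky decomposition Σ = Ω^T Ω and that f_t, g_t, m_t are Lipschitz with constants L_f, L_g, L_m for all t ∈ [T]. Let φ_{≤T} : (R^n)^T → (R^n)^T be the bijection sending the noise sequence w_{≤T} to the comparison-process states y_{≤T} defined by y_t = m_t(y_{<t}) + w_t (so y_{≤T} = φ_{≤T}(w_{≤T}) if and only if y_{≤T} − m_{≤T}(y_{<T}) = w_{≤T}). Then φ_{≤T} is Lipschitz continuous with Lip(φ_{≤T}) ≤ √T (1 + L_m)^{T−1}; consequently, writing W = Z Ω where Z ∈ R^{n×T} has independent standard Gaussian entries, the matrix Y of comparison-process states is a Lipschitz function of Z with Lipschitz constant at most √T (1 + L_m)^{T−1} ‖Ω‖_op (with respect to Frobenius norms). -/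

import Mathlib

set_option synthInstance.maxHeartbeats 1000000
set_option maxHeartbeats 1000000


open MeasureTheory Matrix Finset

noncomputable section

/-- Euclidean norm of a finitely-indexed real vector. -/
def enorm' {ι : Type*} [Fintype ι] (v : ι → ℝ) : ℝ := Real.sqrt (∑ i, v i ^ 2)

/-- Frobenius norm of a real matrix. -/
def frob {ι κ : Type*} [Fintype ι] [Fintype κ] (M : Matrix ι κ ℝ) : ℝ :=
  Real.sqrt (∑ i, ∑ j, M i j ^ 2)

/-- Spectral (Euclidean operator) norm of a real matrix. -/
def opNorm {ι κ : Type*} [Fintype ι] [Fintype κ] (M : Matrix ι κ ℝ) : ℝ :=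
  sSup ((fun v => enorm' (M.mulVec v)) '' {v | enorm' v ≤ 1})

/-- `L`-Lipschitz continuity for a function of a stacked history, with respect to the
Euclidean (ℓ²) norms. -/
def LipStack {n k : ℕ} (L : ℝ) (f : (Fin k → (Fin n → ℝ)) → (Fin n → ℝ)) : Prop :=
  ∀ a b, enorm' (f a - f b) ≤ L * Real.sqrt (∑ s, enorm' (a s - b s) ^ 2)

/-- The comparison-process states built from the noise `w`: `y_t = m_t(y_{<t}) + w_t`.
This is the map `φ_{≤T}`. -/
def seqY {n T : ℕ} (m : ∀ t : Fin T, (Fin t.1 → (Fin n → ℝ)) → (Fin n → ℝ))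
    (w : Fin T → (Fin n → ℝ)) : Fin T → (Fin n → ℝ) :=
  fun t => m t (fun s => seqY m w ⟨s.1, s.2.trans t.isLt⟩) + w t
termination_by t => t.1
decreasing_by exact s.2

lemma enorm'_eq_norm {ι : Type*} [Fintype ι] (v : ι → ℝ) :
    enorm' v = ‖((WithLp.equiv 2 (ι → ℝ)).symm v : EuclideanSpace ℝ ι)‖ := by
  rw [EuclideanSpace.norm_eq]
  simp [enorm', sq_abs]

lemma enorm'_nonneg {ι : Type*} [Fintype ι] (v : ι → ℝ) : 0 ≤ enorm' v :=
  Real.sqrt_nonneg _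

lemma enorm'_sq {ι : Type*} [Fintype ι] (v : ι → ℝ) : enorm' v ^ 2 = ∑ i, v i ^ 2 :=
  Real.sq_sqrt (by positivity)

lemma enorm'_add_le {ι : Type*} [Fintype ι] (u v : ι → ℝ) :
    enorm' (u + v) ≤ enorm' u + enorm' v := by
  rw [enorm'_eq_norm, enorm'_eq_norm, enorm'_eq_norm, WithLp.equiv_symm_apply, WithLp.toLp_add]
  exact norm_add_le _ _

def matCLM {T : ℕ} (M : Matrix (Fin T) (Fin T) ℝ) :
    EuclideanSpace ℝ (Fin T) →L[ℝ] EuclideanSpace ℝ (Fin T) :=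
  LinearMap.toContinuousLinearMap (Matrix.toEuclideanLin M)

lemma matCLM_apply {T : ℕ} (M : Matrix (Fin T) (Fin T) ℝ) (x : EuclideanSpace ℝ (Fin T)) :
    matCLM M x = (WithLp.equiv 2 (Fin T → ℝ)).symm (M.mulVec (WithLp.equiv 2 (Fin T → ℝ) x)) := by
  simp [matCLM, Matrix.toEuclideanLin_apply]

lemma opNorm_eq_norm_matCLM {T : ℕ} (M : Matrix (Fin T) (Fin T) ℝ) :
    opNorm M = ‖matCLM M‖ := by
  rw [← ContinuousLinearMap.sSup_unitClosedBall_eq_norm]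
  unfold opNorm
  congr 1
  ext y
  constructor
  · rintro ⟨v, hv, rfl⟩
    refine ⟨(WithLp.equiv 2 (Fin T → ℝ)).symm v, ?_, ?_⟩
    · rw [Metric.mem_closedBall, dist_zero_right, ← enorm'_eq_norm]
      exact hv
    · show ‖matCLM M _‖ = _
      rw [matCLM_apply, ← enorm'_eq_norm]
      simp
  · rintro ⟨x, hx, rfl⟩
    refine ⟨WithLp.equiv 2 (Fin T → ℝ) x, ?_, ?_⟩
    · show enorm' _ ≤ 1
      rw [enorm'_eq_norm]
      simpa [Metric.mem_closedBall, dist_zero_right] using hx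
    · show enorm' _ = ‖matCLM M _‖
      rw [matCLM_apply, enorm'_eq_norm]

lemma opNorm_nonneg' {T : ℕ} (M : Matrix (Fin T) (Fin T) ℝ) : 0 ≤ opNorm M := by
  rw [opNorm_eq_norm_matCLM]; exact norm_nonneg _

lemma enorm'_mulVec_le {T : ℕ} (M : Matrix (Fin T) (Fin T) ℝ) (v : Fin T → ℝ) :
    enorm' (M.mulVec v) ≤ opNorm M * enorm' v := by
  rw [opNorm_eq_norm_matCLM]
  have := (matCLM M).le_opNorm ((WithLp.equiv 2 (Fin T → ℝ)).symm v)
  rw [matCLM_apply] at this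
  rw [enorm'_eq_norm, enorm'_eq_norm]
  simpa using this

lemma opNorm_transpose {T : ℕ} (M : Matrix (Fin T) (Fin T) ℝ) :
    opNorm Mᵀ = opNorm M := by
  rw [opNorm_eq_norm_matCLM, opNorm_eq_norm_matCLM]
  have h1 : Mᵀ = Mᴴ := (Matrix.conjTranspose_eq_transpose_of_trivial M).symm
  rw [h1]
  have h2 : matCLM Mᴴ = ContinuousLinearMap.adjoint (matCLM M) := by
    unfold matCLM
    rw [Matrix.toEuclideanLin_conjTranspose_eq_adjoint,
      LinearMap.adjoint_toContinuousLinearMap]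
  rw [h2, ContinuousLinearMap.adjoint.norm_map]

lemma frob_mul_le {n T : ℕ} (A : Matrix (Fin n) (Fin T) ℝ) (B : Matrix (Fin T) (Fin T) ℝ) :
    frob (A * B) ≤ opNorm B * frob A := by
  have key : ∀ i, ∑ j, (A * B) i j ^ 2 ≤ opNorm B ^ 2 * ∑ j, A i j ^ 2 := by
    intro i
    have h1 : ∑ j, (A * B) i j ^ 2 = enorm' (Bᵀ.mulVec (A i)) ^ 2 := by
      rw [enorm'_sq]
      refine Finset.sum_congr rfl fun j _ => ?_
      simp [Matrix.mul_apply, Matrix.mulVec, Matrix.transpose_apply, dotProduct, mul_comm]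
    have h2 := enorm'_mulVec_le Bᵀ (A i)
    rw [opNorm_transpose] at h2
    calc ∑ j, (A * B) i j ^ 2 = enorm' (Bᵀ.mulVec (A i)) ^ 2 := h1
      _ ≤ (opNorm B * enorm' (A i)) ^ 2 := by
          have := enorm'_nonneg (Bᵀ.mulVec (A i))
          nlinarith
      _ = opNorm B ^ 2 * ∑ j, A i j ^ 2 := by rw [mul_pow, enorm'_sq]
  unfold frob
  calc Real.sqrt (∑ i, ∑ j, (A * B) i j ^ 2)
      ≤ Real.sqrt (∑ i, opNorm B ^ 2 * ∑ j, A i j ^ 2) :=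
        Real.sqrt_le_sqrt (Finset.sum_le_sum fun i _ => key i)
    _ = Real.sqrt (opNorm B ^ 2 * ∑ i, ∑ j, A i j ^ 2) := by rw [Finset.mul_sum]
    _ = opNorm B * Real.sqrt (∑ i, ∑ j, A i j ^ 2) := by
        rw [Real.sqrt_mul (by positivity), Real.sqrt_sq (opNorm_nonneg' B)]

lemma sqrt_add_sq_le (a b : ℝ) (ha : 0 ≤ a) (hb : 0 ≤ b) :
    Real.sqrt (a + b ^ 2) ≤ Real.sqrt a + b := by
  have h : a + b ^ 2 ≤ (Real.sqrt a + b) ^ 2 := by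
    nlinarith [Real.sq_sqrt ha, Real.sqrt_nonneg a]
  calc Real.sqrt (a + b ^ 2) ≤ Real.sqrt ((Real.sqrt a + b) ^ 2) := Real.sqrt_le_sqrt h
    _ = Real.sqrt a + b := Real.sqrt_sq (by positivity)

lemma sum_le_sqrt_card_mul {k : ℕ} (e : ℕ → ℝ) (he : ∀ s, 0 ≤ e s) :
    ∑ s ∈ range k, e s ≤ Real.sqrt k * Real.sqrt (∑ s ∈ range k, e s ^ 2) := by
  rw [← Real.sqrt_mul (by positivity)]
  calc ∑ s ∈ range k, e s = Real.sqrt ((∑ s ∈ range k, e s) ^ 2) :=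
        (Real.sqrt_sq (Finset.sum_nonneg fun s _ => he s)).symm
    _ ≤ Real.sqrt (k * ∑ s ∈ range k, e s ^ 2) := by
        apply Real.sqrt_le_sqrt
        have := sq_sum_le_card_mul_sum_sq (s := range k) (f := e)
        simpa using this

/-- **Lipschitz change of variables for the comparison process** (eq. (24) in the proof of
Theorem 5). Assume `Σ = Ωᵀ Ω` is positive definite and `f_t, g_t, m_t` are Lipschitz with
constants `L_f, L_g, L_m`. Then the bijection `φ_{≤T}` sending the noise `w_{≤T}` to the
states `y_{≤T}` satisfies `Lip(φ_{≤T}) ≤ √T (1 + L_m)^{T−1}`; consequently, with `W = Z Ω`,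
the state matrix `Y` is a Lipschitz function of `Z` with constant
`√T (1 + L_m)^{T−1} ‖Ω‖_op` (Frobenius norms). -/
theorem comparison_change_of_variables {n T : ℕ}
    (f g m : ∀ t : Fin T, (Fin t.1 → (Fin n → ℝ)) → (Fin n → ℝ))
    (Sig Ω : Matrix (Fin T) (Fin T) ℝ)
    (hSig : Sig.PosDef) (hChol : Ωᵀ * Ω = Sig)
    (hCholUp : ∀ i j : Fin T, j < i → Ω i j = 0) (hCholDiag : ∀ i, 0 ≤ Ω i i)
    (Lf Lg Lm : ℝ) (hLm0 : 0 ≤ Lm)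
    (hf : ∀ t, LipStack Lf (f t)) (hg : ∀ t, LipStack Lg (g t))
    (hm : ∀ t, LipStack Lm (m t)) :
    (∀ w w' : Fin T → (Fin n → ℝ),
      Real.sqrt (∑ t, enorm' (seqY m w t - seqY m w' t) ^ 2) ≤
        Real.sqrt T * (1 + Lm) ^ (T - 1) *
          Real.sqrt (∑ t, enorm' (w t - w' t) ^ 2)) ∧
    (∀ Z Z' : Matrix (Fin n) (Fin T) ℝ,
      frob (Matrix.of fun i t =>
          seqY m (fun t' i' => ∑ s, Z i' s * Ω s t') t i -
            seqY m (fun t' i' => ∑ s, Z' i' s * Ω s t') t i) ≤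
        Real.sqrt T * (1 + Lm) ^ (T - 1) * opNorm Ω * frob (Z - Z')) := by
  have main : ∀ w w' : Fin T → (Fin n → ℝ),
      Real.sqrt (∑ t, enorm' (seqY m w t - seqY m w' t) ^ 2) ≤
        Real.sqrt T * (1 + Lm) ^ (T - 1) *
          Real.sqrt (∑ t, enorm' (w t - w' t) ^ 2) := by
    intro w w'
    obtain ⟨D, hDdef⟩ : ∃ D : ℕ → ℝ, D = fun s =>
        if h : s < T then enorm' (seqY m w ⟨s, h⟩ - seqY m w' ⟨s, h⟩) else 0 := ⟨_, rfl⟩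
    obtain ⟨E, hEdef⟩ : ∃ E : ℕ → ℝ, E = fun s =>
        if h : s < T then enorm' (w ⟨s, h⟩ - w' ⟨s, h⟩) else 0 := ⟨_, rfl⟩
    have hDnn : ∀ s, 0 ≤ D s := by
      intro s; rw [hDdef]; dsimp only; split
      · exact enorm'_nonneg _
      · exact le_refl 0
    have hEnn : ∀ s, 0 ≤ E s := by
      intro s; rw [hEdef]; dsimp only; split
      · exact enorm'_nonneg _
      · exact le_refl 0
    have hrec : ∀ k, D k ≤ Lm * Real.sqrt (∑ s ∈ range k, D s ^ 2) + E k := by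
      intro k
      by_cases hk : k < T
      · have hy : seqY m w ⟨k, hk⟩ - seqY m w' ⟨k, hk⟩ =
            (m ⟨k, hk⟩ (fun s => seqY m w ⟨s.1, s.2.trans hk⟩) -
              m ⟨k, hk⟩ (fun s => seqY m w' ⟨s.1, s.2.trans hk⟩)) +
            (w ⟨k, hk⟩ - w' ⟨k, hk⟩) := by
          rw [seqY, seqY]
          abel
        have h2 := hm ⟨k, hk⟩ (fun s => seqY m w ⟨s.1, s.2.trans hk⟩)
          (fun s => seqY m w' ⟨s.1, s.2.trans hk⟩)
        have hsum : ∑ s : Fin k, enorm'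
            (seqY m w ⟨s.1, s.2.trans hk⟩ - seqY m w' ⟨s.1, s.2.trans hk⟩) ^ 2
            = ∑ s ∈ range k, D s ^ 2 := by
          rw [← Fin.sum_univ_eq_sum_range (fun s => D s ^ 2) k]
          refine Finset.sum_congr rfl fun s _ => ?_
          rw [hDdef]
          dsimp only
          rw [dif_pos (s.2.trans hk)]
        have hDk : D k = enorm' (seqY m w ⟨k, hk⟩ - seqY m w' ⟨k, hk⟩) := by
          rw [hDdef]; dsimp only; rw [dif_pos hk]
        have hEk : E k = enorm' (w ⟨k, hk⟩ - w' ⟨k, hk⟩) := by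
          rw [hEdef]; dsimp only; rw [dif_pos hk]
        rw [hDk, hEk, hy]
        calc enorm' _ ≤ enorm' (m ⟨k, hk⟩ (fun s => seqY m w ⟨s.1, s.2.trans hk⟩) -
                m ⟨k, hk⟩ (fun s => seqY m w' ⟨s.1, s.2.trans hk⟩)) +
              enorm' (w ⟨k, hk⟩ - w' ⟨k, hk⟩) := enorm'_add_le _ _
          _ ≤ Lm * Real.sqrt (∑ s ∈ range k, D s ^ 2) + enorm' (w ⟨k, hk⟩ - w' ⟨k, hk⟩) := by
              rw [← hsum]; exact add_le_add h2 le_rfl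
      · have hD0 : D k = 0 := by rw [hDdef]; dsimp only; rw [dif_neg hk]
        rw [hD0]
        exact add_nonneg (mul_nonneg hLm0 (Real.sqrt_nonneg _)) (hEnn k)
    have key : ∀ k : ℕ, Real.sqrt (∑ s ∈ range (k + 1), D s ^ 2) ≤
        (1 + Lm) ^ k * ∑ s ∈ range (k + 1), E s := by
      intro k
      induction k with
      | zero =>
        simp only [zero_add, range_one, sum_singleton, pow_zero, one_mul]
        rw [Real.sqrt_sq (hDnn 0)]
        have h := hrec 0
        simpa using h
      | succ k ih =>
        have hS : 0 ≤ Real.sqrt (∑ s ∈ range (k + 1), D s ^ 2) := Real.sqrt_nonneg _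
        have hSE : 0 ≤ ∑ s ∈ range (k + 1), E s := Finset.sum_nonneg fun s _ => hEnn s
        have h1 : Real.sqrt (∑ s ∈ range (k + 2), D s ^ 2) ≤
            Real.sqrt (∑ s ∈ range (k + 1), D s ^ 2) + D (k + 1) := by
          rw [sum_range_succ]
          exact sqrt_add_sq_le _ _ (Finset.sum_nonneg fun s _ => by positivity) (hDnn _)
        have h2 := hrec (k + 1)
        have hpow : (1 : ℝ) ≤ (1 + Lm) ^ (k + 1) := one_le_pow₀ (by linarith)
        calc Real.sqrt (∑ s ∈ range (k + 2), D s ^ 2)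
            ≤ Real.sqrt (∑ s ∈ range (k + 1), D s ^ 2) + D (k + 1) := h1
          _ ≤ Real.sqrt (∑ s ∈ range (k + 1), D s ^ 2) +
              (Lm * Real.sqrt (∑ s ∈ range (k + 1), D s ^ 2) + E (k + 1)) := by linarith
          _ = (1 + Lm) * Real.sqrt (∑ s ∈ range (k + 1), D s ^ 2) + E (k + 1) := by ring
          _ ≤ (1 + Lm) * ((1 + Lm) ^ k * ∑ s ∈ range (k + 1), E s) + E (k + 1) := by
              have := mul_le_mul_of_nonneg_left ih (show (0:ℝ) ≤ 1 + Lm by linarith)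
              linarith
          _ ≤ (1 + Lm) ^ (k + 1) * ∑ s ∈ range (k + 1), E s +
              (1 + Lm) ^ (k + 1) * E (k + 1) := by
              have h3 := hEnn (k + 1)
              have h4 : (1 + Lm) * ((1 + Lm) ^ k * ∑ s ∈ range (k + 1), E s) =
                  (1 + Lm) ^ (k + 1) * ∑ s ∈ range (k + 1), E s := by ring
              nlinarith
          _ = (1 + Lm) ^ (k + 1) * ∑ s ∈ range (k + 2), E s := by
              conv_rhs => rw [sum_range_succ]
              ring
    rcases Nat.eq_zero_or_pos T with hT | hT
    · subst hT
      simp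
    · obtain ⟨k, rfl⟩ : ∃ k, T = k + 1 := ⟨T - 1, (Nat.succ_pred_eq_of_pos hT).symm⟩
      have hL : Real.sqrt (∑ t, enorm' (seqY m w t - seqY m w' t) ^ 2) =
          Real.sqrt (∑ s ∈ range (k + 1), D s ^ 2) := by
        congr 1
        rw [← Fin.sum_univ_eq_sum_range (fun s => D s ^ 2) (k + 1)]
        refine Finset.sum_congr rfl fun t _ => ?_
        rw [hDdef]; dsimp only; rw [dif_pos t.isLt]
      have hR : Real.sqrt (∑ t, enorm' (w t - w' t) ^ 2) =
          Real.sqrt (∑ s ∈ range (k + 1), E s ^ 2) := by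
        congr 1
        rw [← Fin.sum_univ_eq_sum_range (fun s => E s ^ 2) (k + 1)]
        refine Finset.sum_congr rfl fun t _ => ?_
        rw [hEdef]; dsimp only; rw [dif_pos t.isLt]
      rw [hL, hR]
      have hCS := sum_le_sqrt_card_mul (k := k + 1) E hEnn
      have hpnn : (0 : ℝ) ≤ (1 + Lm) ^ k := by positivity
      calc Real.sqrt (∑ s ∈ range (k + 1), D s ^ 2)
          ≤ (1 + Lm) ^ k * ∑ s ∈ range (k + 1), E s := key k
        _ ≤ (1 + Lm) ^ k * (Real.sqrt (k + 1 : ℕ) * Real.sqrt (∑ s ∈ range (k + 1), E s ^ 2)) :=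
            mul_le_mul_of_nonneg_left hCS hpnn
        _ = Real.sqrt ((k + 1 : ℕ) : ℝ) * (1 + Lm) ^ (k + 1 - 1) *
            Real.sqrt (∑ s ∈ range (k + 1), E s ^ 2) := by
            rw [Nat.add_sub_cancel]; ring
  refine ⟨main, fun Z Z' => ?_⟩
  set w : Fin T → (Fin n → ℝ) := fun t' i' => ∑ s, Z i' s * Ω s t' with hw
  set w2 : Fin T → (Fin n → ℝ) := fun t' i' => ∑ s, Z' i' s * Ω s t' with hw2
  have h1 := main w w2
  have lhs_eq : frob (Matrix.of fun i t => seqY m w t i - seqY m w2 t i) =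
      Real.sqrt (∑ t, enorm' (seqY m w t - seqY m w2 t) ^ 2) := by
    unfold frob
    congr 1
    rw [Finset.sum_comm]
    refine Finset.sum_congr rfl fun t _ => ?_
    rw [enorm'_sq]
    refine Finset.sum_congr rfl fun i _ => ?_
    simp [Matrix.of_apply, Pi.sub_apply]
  have rhs_eq : Real.sqrt (∑ t, enorm' (w t - w2 t) ^ 2) = frob ((Z - Z') * Ω) := by
    unfold frob
    congr 1
    rw [Finset.sum_comm]
    refine Finset.sum_congr rfl fun t _ => ?_
    rw [enorm'_sq]
    refine Finset.sum_congr rfl fun i _ => ?_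
    congr 1
    simp only [hw, hw2, Pi.sub_apply, Matrix.mul_apply, Matrix.sub_apply]
    rw [← Finset.sum_sub_distrib]
    refine Finset.sum_congr rfl fun s _ => ?_
    ring
  have hcnn : (0:ℝ) ≤ Real.sqrt T * (1 + Lm) ^ (T - 1) :=
    mul_nonneg (Real.sqrt_nonneg _) (pow_nonneg (by linarith) _)
  calc frob (Matrix.of fun i t => seqY m w t i - seqY m w2 t i)
      = Real.sqrt (∑ t, enorm' (seqY m w t - seqY m w2 t) ^ 2) := lhs_eq
    _ ≤ Real.sqrt T * (1 + Lm) ^ (T - 1) * Real.sqrt (∑ t, enorm' (w t - w2 t) ^ 2) := h1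
    _ = Real.sqrt T * (1 + Lm) ^ (T - 1) * frob ((Z - Z') * Ω) := by rw [rhs_eq]
    _ ≤ Real.sqrt T * (1 + Lm) ^ (T - 1) * (opNorm Ω * frob (Z - Z')) :=
        mul_le_mul_of_nonneg_left (frob_mul_le _ _) hcnn
    _ = Real.sqrt T * (1 + Lm) ^ (T - 1) * opNorm Ω * frob (Z - Z') := by ring

end
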